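/- (Error difference inequality, last neighborhood.) Let f* satisfy the LPA stationarity condition. Then C_in(l)·(E_in(l) − E_out(l−1)) + μ Σ_{i∈N_l} |f*_i − y_i| ≤ s_l + μ|N_l|·α_l, where E_in, E_out are evaluated at f = f*. -/

import Mathlib

open Finset

/-- The graph on the data points: an edge between distinct `i, j` iff the weight is positive. -/
def graphOf {N : ℕ} (w : Fin N → Fin N → ℝ) : SimpleGraph (Fin N) where
  Adj i j := i ≠ j ∧ 0 < w i j ∧ 0 < w j i
  symm := ⟨fun _ _ h => ⟨h.1.symm, h.2.2, h.2.1⟩⟩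
  loopless := ⟨fun _ h => h.1 rfl⟩

/-- Hop distance from `i` to the set `L = {0, …, n−1}` of labeled points
(`⊤` if `i` is not reachable from any labeled point). -/
noncomputable def hopDist {N : ℕ} (w : Fin N → Fin N → ℝ) (n : ℕ) (i : Fin N) : ℕ∞ :=
  ⨅ v ∈ {v : Fin N | (v : ℕ) < n}, (graphOf w).edist i v

open scoped Classical in
/-- `N_k`: the set of points at hop distance exactly `k` from the labeled set. -/
noncomputable def Nbhd {N : ℕ} (w : Fin N → Fin N → ℝ) (n k : ℕ) : Finset (Fin N) :=
  Finset.univ.filter fun i => hopDist w n i = (k : ℕ∞)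

/-- In-flow `C_in(k) = ∑_{i∈N_k, j∈N_{k−1}} wᵢⱼ`. -/
noncomputable def Cin {N : ℕ} (w : Fin N → Fin N → ℝ) (n k : ℕ) : ℝ :=
  ∑ i ∈ Nbhd w n k, ∑ j ∈ Nbhd w n (k - 1), w i j

/-- Out-flow `C_out(k) = ∑_{i∈N_k, j∈N_{k+1}} wᵢⱼ`. -/
noncomputable def Cout {N : ℕ} (w : Fin N → Fin N → ℝ) (n k : ℕ) : ℝ :=
  ∑ i ∈ Nbhd w n k, ∑ j ∈ Nbhd w n (k + 1), w i j

/-- In-error `E_in(k) = (∑_{i∈N_k, j∈N_{k−1}} wᵢⱼ|fᵢ − yᵢ|) / C_in(k)`. -/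
noncomputable def Ein {N : ℕ} (w : Fin N → Fin N → ℝ) (n : ℕ) (y f : Fin N → ℝ) (k : ℕ) : ℝ :=
  (∑ i ∈ Nbhd w n k, ∑ j ∈ Nbhd w n (k - 1), w i j * |f i - y i|) / Cin w n k

/-- Out-error `E_out(k) = (∑_{i∈N_k, j∈N_{k+1}} wᵢⱼ|fᵢ − yᵢ|) / C_out(k)`. -/
noncomputable def Eout {N : ℕ} (w : Fin N → Fin N → ℝ) (n : ℕ) (y f : Fin N → ℝ) (k : ℕ) : ℝ :=
  (∑ i ∈ Nbhd w n k, ∑ j ∈ Nbhd w n (k + 1), w i j * |f i - y i|) / Cout w n k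

/-- Smoothness `s_k = ∑_{i∈N_k} ∑_j wᵢⱼ|yⱼ − yᵢ|`. -/
noncomputable def smoothnessOf {N : ℕ} (w : Fin N → Fin N → ℝ) (n : ℕ) (y : Fin N → ℝ)
    (k : ℕ) : ℝ :=
  ∑ i ∈ Nbhd w n k, ∑ j : Fin N, w i j * |y j - y i|

/-- Prior information error `α_k = (∑_{i∈N_k} |hᵢ − yᵢ|) / |N_k|`. -/
noncomputable def priorErr {N : ℕ} (w : Fin N → Fin N → ℝ) (n : ℕ) (y h : Fin N → ℝ)
    (k : ℕ) : ℝ :=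
  (∑ i ∈ Nbhd w n k, |h i - y i|) / (Nbhd w n k).card

/-- Average error `E_k = (∑_{i∈N_k} |fᵢ − yᵢ|) / |N_k|`. -/
noncomputable def avgErr {N : ℕ} (w : Fin N → Fin N → ℝ) (n : ℕ) (y f : Fin N → ℝ)
    (k : ℕ) : ℝ :=
  (∑ i ∈ Nbhd w n k, |f i - y i|) / (Nbhd w n k).card


lemma hopDist_eq_zero {N : ℕ} (w : Fin N → Fin N → ℝ) {n : ℕ} {i : Fin N}
    (hi : (i : ℕ) < n) : hopDist w n i = 0 := by
  refine le_antisymm ?_ zero_le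
  have : hopDist w n i ≤ (graphOf w).edist i i := iInf₂_le i hi
  simpa using this

lemma hopDist_le_adj {N : ℕ} (w : Fin N → Fin N → ℝ) {n : ℕ} {i j : Fin N}
    (hadj : (graphOf w).Adj i j) : hopDist w n j ≤ hopDist w n i + 1 := by
  rcases eq_or_ne (hopDist w n i) ⊤ with htop | htop
  · simp [htop]
  -- hopDist i is finite, find witness v
  lift hopDist w n i to ℕ using htop with m hm
  have hlt : hopDist w n i < (m : ℕ∞) + 1 := by
    rw [← hm]; exact_mod_cast Nat.lt_succ_self m
  rw [hopDist] at hlt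
  simp only [iInf_lt_iff] at hlt
  obtain ⟨v, hv, hlt⟩ := hlt
  have h1 : (graphOf w).edist j i = 1 := SimpleGraph.edist_eq_one_iff_adj.mpr hadj.symm
  have := SimpleGraph.edist_triangle (G := graphOf w) (u := j) (v := i) (w := v)
  have h2 : (graphOf w).edist j v ≤ 1 + (graphOf w).edist i v := by rw [← h1]; exact this
  have h3 : hopDist w n j ≤ (graphOf w).edist j v := iInf₂_le v hv
  have h4 : hopDist w n j ≤ 1 + (m : ℕ∞) := by
    refine (h3.trans h2).trans ?_
    gcongr
    exact Order.le_of_lt_add_one hlt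
  exact h4.trans_eq (add_comm _ _)

lemma mem_Nbhd_iff {N : ℕ} {w : Fin N → Fin N → ℝ} {n k : ℕ} {i : Fin N} :
    i ∈ Nbhd w n k ↔ hopDist w n i = (k : ℕ∞) := by
  classical
  simp [Nbhd]

lemma Nbhd_unlabeled {N : ℕ} {w : Fin N → Fin N → ℝ} {n l : ℕ} (hl : 1 ≤ l) {i : Fin N}
    (hi : i ∈ Nbhd w n l) : n ≤ (i : ℕ) := by
  by_contra hc
  push_neg at hc
  have h0 := hopDist_eq_zero w hc
  rw [mem_Nbhd_iff] at hi
  rw [h0] at hi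
  have : l = 0 := by exact_mod_cast hi.symm
  omega

lemma neighbor_mem {N : ℕ} {w : Fin N → Fin N → ℝ} {n l : ℕ}
    (hw_symm : ∀ i j, w i j = w j i) (hw_nonneg : ∀ i j, 0 ≤ w i j) (hl : 1 ≤ l)
    (hmax : Nbhd w n (l + 1) = ∅) {i j : Fin N}
    (hi : i ∈ Nbhd w n l) (hwij : w i j ≠ 0) :
    j ∈ Nbhd w n (l - 1) ∪ Nbhd w n l := by
  rcases eq_or_ne i j with rfl | hne
  · exact Finset.mem_union_right _ hi
  have hpos : 0 < w i j := lt_of_le_of_ne (hw_nonneg i j) (Ne.symm hwij)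
  have hadj : (graphOf w).Adj i j :=
    (⟨hne, hpos, by rw [← hw_symm]; exact hpos⟩ : i ≠ j ∧ 0 < w i j ∧ 0 < w j i)
  rw [mem_Nbhd_iff] at hi
  have hle1 : hopDist w n j ≤ (l : ℕ∞) + 1 := by
    have := hopDist_le_adj (n := n) w hadj; rwa [hi] at this
  have hle2 : (l : ℕ∞) ≤ hopDist w n j + 1 := by
    have := hopDist_le_adj (n := n) w hadj.symm; rwa [hi] at this
  have htop : hopDist w n j ≠ ⊤ := by
    intro hc; rw [hc] at hle1
    have : ((l : ℕ∞) + 1) ≠ ⊤ := by exact_mod_cast ENat.coe_ne_top (l + 1)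
    exact this (top_le_iff.mp hle1)
  lift hopDist w n j to ℕ using htop with m hm
  have hm1 : m ≤ l + 1 := by exact_mod_cast hle1
  have hm2 : l ≤ m + 1 := by exact_mod_cast hle2
  have hmne : m ≠ l + 1 := by
    intro hc
    have : j ∈ Nbhd w n (l + 1) := by rw [mem_Nbhd_iff, ← hm, hc]
    rw [hmax] at this; exact absurd this (Finset.notMem_empty j)
  have : m = l - 1 ∨ m = l := by omega
  rcases this with hc | hc
  · exact Finset.mem_union_left _ (by rw [mem_Nbhd_iff, ← hm, hc])
  · exact Finset.mem_union_right _ (by rw [mem_Nbhd_iff, ← hm, hc])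


/-- (Error difference inequality, last neighborhood.) If `f*` satisfies the
LPA stationarity condition, then
`C_in(l)(E_in(l) − E_out(l−1)) + μ ∑_{i∈N_l}|f*ᵢ − yᵢ| ≤ s_l + μ|N_l|α_l`. -/
theorem error_difference_inequality_last
    {N n : ℕ} (hn : 0 < n) (hnN : n ≤ N)
    (w : Fin N → Fin N → ℝ)
    (hw_symm : ∀ i j, w i j = w j i)
    (hw_nonneg : ∀ i j, 0 ≤ w i j)
    (y h : Fin N → ℝ)
    (hy : ∀ i, y i ∈ Set.Icc (0 : ℝ) 1)
    (hh : ∀ i, h i ∈ Set.Icc (0 : ℝ) 1)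
    (μ : ℝ) (hμ : 0 ≤ μ)
    (fstar : Fin N → ℝ)
    (hconstr : ∀ i : Fin N, (i : ℕ) < n → fstar i = y i)
    (hstat : ∀ i : Fin N, n ≤ (i : ℕ) →
      fstar i = ((∑ j, w i j * fstar j) + μ * h i) / ((∑ j, w i j) + μ))
    (l : ℕ) (hl : 1 ≤ l)
    (hne : ∀ k, k ≤ l → (Nbhd w n k).Nonempty)
    (hmax : ∀ k, l < k → Nbhd w n k = ∅) :
    Cin w n l * (Ein w n y fstar l - Eout w n y fstar (l - 1))
        + μ * ∑ i ∈ Nbhd w n l, |fstar i - y i|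
      ≤ smoothnessOf w n y l + μ * (Nbhd w n l).card * priorErr w n y h l := by
  classical
  -- Per-point inequality from stationarity
  have key : ∀ i : Fin N, n ≤ (i : ℕ) →
      |fstar i - y i| * ((∑ j, w i j) + μ) ≤
        (∑ j, w i j * |fstar j - y j|) + (∑ j, w i j * |y j - y i|) + μ * |h i - y i| := by
    intro i hi
    set S := ∑ j, w i j with hS
    have hS0 : 0 ≤ S := Finset.sum_nonneg fun j _ => hw_nonneg i j
    have hRnn : 0 ≤ (∑ j, w i j * |fstar j - y j|) + (∑ j, w i j * |y j - y i|)
        + μ * |h i - y i| := by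
      have t1 : 0 ≤ ∑ j, w i j * |fstar j - y j| :=
        Finset.sum_nonneg fun j _ => mul_nonneg (hw_nonneg i j) (abs_nonneg _)
      have t2 : 0 ≤ ∑ j, w i j * |y j - y i| :=
        Finset.sum_nonneg fun j _ => mul_nonneg (hw_nonneg i j) (abs_nonneg _)
      have t3 : 0 ≤ μ * |h i - y i| := mul_nonneg hμ (abs_nonneg _)
      linarith
    rcases eq_or_lt_of_le (by positivity : (0:ℝ) ≤ S + μ) with h0 | h0
    · rw [← h0, mul_zero]; exact hRnn
    · have e1 : fstar i * (S + μ) = (∑ j, w i j * fstar j) + μ * h i := by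
        rw [hstat i hi, ← hS]; field_simp
      have expand : ∑ j, (w i j * (fstar j - y j) + w i j * (y j - y i)) =
          (∑ j, w i j * fstar j) - y i * S := by
        have hpt : ∀ j : Fin N, w i j * (fstar j - y j) + w i j * (y j - y i) =
            w i j * fstar j - w i j * y i := fun j => by ring
        rw [Finset.sum_congr rfl fun j _ => hpt j, Finset.sum_sub_distrib]
        congr 1
        rw [← Finset.sum_mul, ← hS, mul_comm]
      have e2 : (fstar i - y i) * (S + μ) =
          (∑ j, (w i j * (fstar j - y j) + w i j * (y j - y i))) + μ * (h i - y i) := by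
        rw [expand]; linear_combination e1
      calc |fstar i - y i| * (S + μ) = |(fstar i - y i) * (S + μ)| := by
            rw [abs_mul, abs_of_nonneg h0.le]
        _ = |(∑ j, (w i j * (fstar j - y j) + w i j * (y j - y i))) + μ * (h i - y i)| := by
            rw [e2]
        _ ≤ |∑ j, (w i j * (fstar j - y j) + w i j * (y j - y i))| + |μ * (h i - y i)| :=
            abs_add_le _ _
        _ ≤ (∑ j, |w i j * (fstar j - y j) + w i j * (y j - y i)|) + μ * |h i - y i| := by
            refine add_le_add (Finset.abs_sum_le_sum_abs _ _) (le_of_eq ?_)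
            rw [abs_mul, abs_of_nonneg hμ]
        _ ≤ (∑ j, (w i j * |fstar j - y j| + w i j * |y j - y i|)) + μ * |h i - y i| := by
            refine add_le_add_left (Finset.sum_le_sum fun j _ => ?_) _
            calc |w i j * (fstar j - y j) + w i j * (y j - y i)|
                ≤ |w i j * (fstar j - y j)| + |w i j * (y j - y i)| := abs_add_le _ _
              _ = w i j * |fstar j - y j| + w i j * |y j - y i| := by
                  rw [abs_mul, abs_mul, abs_of_nonneg (hw_nonneg i j)]
        _ = (∑ j, w i j * |fstar j - y j|) + (∑ j, w i j * |y j - y i|) + μ * |h i - y i| := by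
            rw [Finset.sum_add_distrib]
  -- Set up the neighborhoods
  set A := Nbhd w n l with hA
  set B := Nbhd w n (l - 1) with hB
  have hdisj : Disjoint B A := by
    rw [Finset.disjoint_left]
    intro x hx hx'
    rw [hB, mem_Nbhd_iff] at hx
    rw [hA, mem_Nbhd_iff] at hx'
    rw [hx] at hx'
    have : l - 1 = l := by exact_mod_cast hx'
    omega
  have hzero : ∀ i ∈ A, ∀ j, j ∉ B ∪ A → w i j = 0 := by
    intro i hi j hj
    by_contra hc
    exact hj (neighbor_mem hw_symm hw_nonneg hl (hmax (l + 1) (by omega)) hi hc)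
  have split : ∀ i ∈ A, ∀ g : Fin N → ℝ,
      (∑ j, w i j * g j) = ∑ j ∈ B, w i j * g j + ∑ j ∈ A, w i j * g j := by
    intro i hi g
    rw [← Finset.sum_union hdisj]
    refine (Finset.sum_subset (Finset.subset_univ _) ?_).symm
    intro j _ hj
    rw [hzero i hi j hj, zero_mul]
  -- Abbreviations
  set S1 := ∑ i ∈ A, ∑ j ∈ B, w i j * |fstar i - y i| with hS1
  set S2 := ∑ i ∈ B, ∑ j ∈ A, w i j * |fstar i - y i| with hS2
  set D := ∑ i ∈ A, ∑ j ∈ A, w i j * |fstar i - y i| with hD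
  set T := ∑ i ∈ A, |fstar i - y i| with hT
  set Hh := ∑ i ∈ A, |h i - y i| with hHh
  -- Summed inequality
  have sum_ineq : ∑ i ∈ A, |fstar i - y i| * ((∑ j, w i j) + μ) ≤
      ∑ i ∈ A, ((∑ j, w i j * |fstar j - y j|) + (∑ j, w i j * |y j - y i|)
        + μ * |h i - y i|) :=
    Finset.sum_le_sum fun i hi => key i (Nbhd_unlabeled hl hi)
  have lhs_eq : ∑ i ∈ A, |fstar i - y i| * ((∑ j, w i j) + μ) = S1 + D + μ * T := by
    have hterm : ∀ i ∈ A, |fstar i - y i| * ((∑ j, w i j) + μ) =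
        (∑ j ∈ B, w i j * |fstar i - y i|) + (∑ j ∈ A, w i j * |fstar i - y i|)
          + μ * |fstar i - y i| := by
      intro i hi
      have h1 : (∑ j, w i j) = ∑ j ∈ B, w i j + ∑ j ∈ A, w i j := by
        have := split i hi (fun _ => 1)
        simpa using this
      rw [h1]
      simp only [← Finset.sum_mul]
      ring
    rw [Finset.sum_congr rfl hterm]
    rw [Finset.sum_add_distrib, Finset.sum_add_distrib, ← Finset.mul_sum]
  have swap1 : ∑ i ∈ A, ∑ j ∈ B, w i j * |fstar j - y j| = S2 := by
    rw [Finset.sum_comm, hS2]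
    exact Finset.sum_congr rfl fun j _ => Finset.sum_congr rfl fun i _ => by rw [hw_symm]
  have swap2 : ∑ i ∈ A, ∑ j ∈ A, w i j * |fstar j - y j| = D := by
    rw [Finset.sum_comm, hD]
    exact Finset.sum_congr rfl fun j _ => Finset.sum_congr rfl fun i _ => by rw [hw_symm]
  have rhs_eq : ∑ i ∈ A, ((∑ j, w i j * |fstar j - y j|) + (∑ j, w i j * |y j - y i|)
        + μ * |h i - y i|) = (S2 + D) + smoothnessOf w n y l + μ * Hh := by
    rw [Finset.sum_add_distrib, Finset.sum_add_distrib, ← Finset.mul_sum]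
    have h1 : ∑ i ∈ A, ∑ j, w i j * |fstar j - y j| = S2 + D := by
      rw [← swap1, ← swap2, ← Finset.sum_add_distrib]
      exact Finset.sum_congr rfl fun i hi => split i hi _
    rw [h1]
    rfl
  have core : S1 + μ * T ≤ S2 + smoothnessOf w n y l + μ * Hh := by
    rw [lhs_eq, rhs_eq] at sum_ineq
    linarith
  -- Convert to the stated quantities
  have hll : l - 1 + 1 = l := by omega
  have hCC : Cout w n (l - 1) = Cin w n l := by
    unfold Cout Cin
    rw [hll, Finset.sum_comm]
    exact Finset.sum_congr rfl fun i _ => Finset.sum_congr rfl fun j _ => hw_symm j i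
  have hCin0 : Cin w n l = 0 → ∀ i ∈ A, ∀ j ∈ B, w i j = 0 := by
    intro h0 i hi j hj
    have inner : ∀ i ∈ A, (0:ℝ) ≤ ∑ j ∈ B, w i j :=
      fun i _ => Finset.sum_nonneg fun j _ => hw_nonneg i j
    have h1 : ∑ j ∈ B, w i j = 0 := (Finset.sum_eq_zero_iff_of_nonneg inner).mp h0 i hi
    exact (Finset.sum_eq_zero_iff_of_nonneg fun j _ => hw_nonneg i j).mp h1 j hj
  have e1 : Cin w n l * Ein w n y fstar l = S1 := by
    rcases eq_or_ne (Cin w n l) 0 with h0 | h0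
    · rw [h0, zero_mul]
      refine (Finset.sum_eq_zero fun i hi => Finset.sum_eq_zero fun j hj => ?_).symm
      rw [hCin0 h0 i hi j hj, zero_mul]
    · unfold Ein
      rw [mul_comm, div_mul_cancel₀ _ h0]
  have e2 : Cin w n l * Eout w n y fstar (l - 1) = S2 := by
    have hEout : Eout w n y fstar (l - 1) = S2 / Cout w n (l - 1) := by
      unfold Eout
      rw [hll]
    rcases eq_or_ne (Cin w n l) 0 with h0 | h0
    · rw [h0, zero_mul]
      refine (Finset.sum_eq_zero fun i hi => Finset.sum_eq_zero fun j hj => ?_).symm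
      rw [hw_symm, hCin0 h0 j hj i hi, zero_mul]
    · rw [hEout, show Cin w n l = Cout w n (l - 1) from hCC.symm, mul_comm,
        div_mul_cancel₀]
      rw [hCC]
      exact h0
  have e3 : ((A.card : ℝ)) * priorErr w n y h l = Hh := by
    have hcard : ((A.card : ℝ)) ≠ 0 := by
      have := (hne l le_rfl).card_pos
      exact_mod_cast Nat.pos_iff_ne_zero.mp this
    unfold priorErr
    rw [mul_comm, div_mul_cancel₀ _ hcard]
  rw [mul_sub, e1, e2, mul_assoc, e3]
  linarith
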